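/- arXiv:2107.08927 — 5 statements merged into one kernel-verified Lean document; each statement's English description precedes it below -/
import Mathlib

section
/- For all σ, σ' > 0, the improper integral over λ ∈ (0,∞) of the difference between the limiting matched-SNR mismatched MSE and the limiting MMSE satisfies ∫₀^∞ [MSE∞(σ,σ',λ,λ) − MMSE∞(σ,λ)] dλ = 4·D_KL(N(0,σ²) ‖ N(0,σ'²)) = 4 ln(σ'/σ) + 2σ²/σ'² − 2. -/
open MeasureTheory ProbabilityTheory Filter Matrix

noncomputable section

/-- The limiting mismatched MSE formula, eq. (4) of the paper. -/
def MSElim (sig sig' lam lam' : ℝ) : ℝ :=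
  if lam ≤ 1 / sig ^ 4 ∧ 1 / sig' ^ 4 ≤ lam' then
    sig ^ 4 + (1 / Real.sqrt lam' - 1 / (lam' * sig' ^ 2)) ^ 2
  else if 1 / sig ^ 4 ≤ lam ∧ 1 / (sig ^ 2 * sig' ^ 2) ≤ Real.sqrt (lam * lam') then
    sig ^ 4 * (1 - Real.sqrt (lam / lam')) ^ 2 + 2 / Real.sqrt (lam * lam') +
      1 / (lam' ^ 2 * sig' ^ 4) +
      (2 * sig ^ 2 / (lam' * sig' ^ 2)) * (1 - Real.sqrt (lam / lam')) -
      2 / (lam * lam' * sig ^ 2 * sig' ^ 2)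
  else sig ^ 4

/-- The limiting MMSE formula. -/
def MMSElim (sig lam : ℝ) : ℝ :=
  if lam ≤ 1 / sig ^ 4 then sig ^ 4 else 2 / lam - 1 / (lam ^ 2 * sig ^ 4)

open Set

lemma ae_ne_restrict (s : Set ℝ) (p : ℝ) : ∀ᵐ x ∂(volume.restrict s), x ≠ p := by
  refine ae_restrict_of_ae ?_
  have h : {x : ℝ | ¬ x ≠ p} = {p} := by ext x; simp
  rw [ae_iff, h]; exact measure_singleton p

lemma tail_integrable (a K : ℝ) (ha : 0 < a) :
    IntegrableOn (fun x => K / x ^ 2) (Ioi a) := by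
  have h := (integrableOn_Ioi_rpow_of_lt (by norm_num : (-2:ℝ) < -1) ha).const_mul K
  refine IntegrableOn.congr_fun h (fun x hx => ?_) measurableSet_Ioi
  have hx0 : 0 < x := ha.trans hx
  show K * x ^ (-2:ℝ) = K / x ^ 2
  rw [Real.rpow_neg hx0.le, show ((2:ℝ)) = ((2:ℕ):ℝ) by norm_num, Real.rpow_natCast]
  rw [div_eq_mul_inv]

lemma tail_value (a K : ℝ) (ha : 0 < a) :
    ∫ x in Ioi a, K / x ^ 2 = K / a := by
  rw [setIntegral_congr_fun measurableSet_Ioi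
      (g := fun x : ℝ => K * x ^ (-2 : ℝ)) ?_]
  · rw [MeasureTheory.integral_const_mul, integral_Ioi_rpow_of_lt (by norm_num) ha]
    rw [show (-2:ℝ)+1 = -1 by norm_num, Real.rpow_neg_one]
    field_simp
  · intro x hx
    have hx0 : 0 < x := ha.trans hx
    show K / x ^ 2 = K * x ^ (-2:ℝ)
    rw [Real.rpow_neg hx0.le, show ((2:ℝ)) = ((2:ℕ):ℝ) by norm_num, Real.rpow_natCast]
    rw [div_eq_mul_inv]

lemma ftc1 (b a c : ℝ) (hb : 0 < b) (hba : b ≤ a) (hc : 0 < c) :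
    ∫ x in Ioc b a, (1 / Real.sqrt x - 1 / (x * c)) ^ 2
      = (Real.log a + (4/c) * (Real.sqrt a)⁻¹ - (1/c^2) * a⁻¹)
        - (Real.log b + (4/c) * (Real.sqrt b)⁻¹ - (1/c^2) * b⁻¹) := by
  rw [← intervalIntegral.integral_of_le hba]
  apply intervalIntegral.integral_eq_sub_of_hasDerivAt
  · intro x hx
    rw [Set.uIcc_of_le hba] at hx
    have hx0 : 0 < x := lt_of_lt_of_le hb hx.1
    have hsx : 0 < Real.sqrt x := Real.sqrt_pos.2 hx0
    have hsq : Real.sqrt x ^ 2 = x := Real.sq_sqrt hx0.le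
    have h1 : HasDerivAt Real.log (1/x) x := by
      simpa [one_div] using Real.hasDerivAt_log hx0.ne'
    have h2 : HasDerivAt (fun y => (4/c) * (Real.sqrt y)⁻¹)
        ((4/c) * (-(1 / (2 * Real.sqrt x)) / Real.sqrt x ^ 2)) x :=
      ((Real.hasDerivAt_sqrt hx0.ne').inv hsx.ne').const_mul (4/c)
    have h3 : HasDerivAt (fun y => (1/c^2) * y⁻¹) ((1/c^2) * (-(x^2)⁻¹)) x :=
      (hasDerivAt_inv hx0.ne').const_mul (1/c^2)
    have h := (h1.add h2).sub h3
    convert h using 1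
    · rfl
    rw [hsq]
    set t := Real.sqrt x with ht
    rw [← hsq]
    have ht0 : t ≠ 0 := hsx.ne'
    field_simp
    ring
  · apply ContinuousOn.intervalIntegrable
    rw [Set.uIcc_of_le hba]
    apply ContinuousOn.pow
    apply ContinuousOn.sub
    · exact continuousOn_const.div (Real.continuous_sqrt.continuousOn)
        (fun x hx => (Real.sqrt_pos.2 (lt_of_lt_of_le hb hx.1)).ne')
    · exact continuousOn_const.div (continuousOn_id.mul continuousOn_const)
        (fun x hx => (mul_pos (lt_of_lt_of_le hb hx.1) hc).ne')

lemma cont1 (b a c : ℝ) (hb : 0 < b) (hc : 0 < c) :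
    ContinuousOn (fun x : ℝ => (1 / Real.sqrt x - 1 / (x * c)) ^ 2) (Icc b a) := by
  apply ContinuousOn.pow
  apply ContinuousOn.sub
  · exact continuousOn_const.div (Real.continuous_sqrt.continuousOn)
      (fun x hx => (Real.sqrt_pos.2 (lt_of_lt_of_le hb hx.1)).ne')
  · exact continuousOn_const.div (continuousOn_id.mul continuousOn_const)
      (fun x hx => (mul_pos (lt_of_lt_of_le hb hx.1) hc).ne')

lemma ftc2 (a c s : ℝ) (ha : 0 < a) (hac : a ≤ c) (hs : 0 < s) :
    ∫ x in Ioc a c, (s - 1 / (x * s)) ^ 2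
      = (s^2 * c - 2 * Real.log c - (1/s^2) * c⁻¹)
        - (s^2 * a - 2 * Real.log a - (1/s^2) * a⁻¹) := by
  rw [← intervalIntegral.integral_of_le hac]
  apply intervalIntegral.integral_eq_sub_of_hasDerivAt
  · intro x hx
    rw [Set.uIcc_of_le hac] at hx
    have hx0 : 0 < x := lt_of_lt_of_le ha hx.1
    have h1 : HasDerivAt (fun y : ℝ => s^2 * y) (s^2) x := by
      simpa using (hasDerivAt_id x).const_mul (s^2)
    have h2 : HasDerivAt (fun y => 2 * Real.log y) (2 * (1/x)) x := by
      simpa [one_div] using (Real.hasDerivAt_log hx0.ne').const_mul 2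
    have h3 : HasDerivAt (fun y : ℝ => (1/s^2) * y⁻¹) ((1/s^2) * (-(x^2)⁻¹)) x :=
      (hasDerivAt_inv hx0.ne').const_mul (1/s^2)
    have h := (h1.sub h2).sub h3
    convert h using 1
    · rfl
    field_simp
    ring
  · apply ContinuousOn.intervalIntegrable
    rw [Set.uIcc_of_le hac]
    apply ContinuousOn.pow
    apply ContinuousOn.sub continuousOn_const
    exact continuousOn_const.div (continuousOn_id.mul continuousOn_const)
      (fun x hx => (mul_pos (lt_of_lt_of_le ha hx.1) hs).ne')

lemma cont2 (a c s : ℝ) (ha : 0 < a) (hs : 0 < s) :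
    ContinuousOn (fun x : ℝ => (s - 1 / (x * s)) ^ 2) (Icc a c) := by
  apply ContinuousOn.pow
  apply ContinuousOn.sub continuousOn_const
  exact continuousOn_const.div (continuousOn_id.mul continuousOn_const)
    (fun x hx => (mul_pos (lt_of_lt_of_le ha hx.1) hs).ne')

lemma diff_zero (sig sig' x : ℝ) (hxA : x < 1/sig^4) (hxB : x < 1/sig'^4) :
    MSElim sig sig' x x - MMSElim sig x = 0 := by
  simp only [MSElim, MMSElim]
  rw [if_neg (fun h => absurd h.2 (not_le.2 hxB)),
      if_neg (fun h => absurd h.1 (not_le.2 hxA)),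
      if_pos hxA.le, sub_self]

lemma diff_tail (sig sig' x : ℝ) (hsig : 0 < sig) (hsig' : 0 < sig')
    (hA : 1/sig^4 < x) (hC : 1/(sig^2*sig'^2) ≤ x) :
    MSElim sig sig' x x - MMSElim sig x = (1/sig'^2 - 1/sig^2)^2 / x^2 := by
  have hx0 : 0 < x := lt_trans (by positivity) hA
  simp only [MSElim, MMSElim]
  rw [if_neg (fun h => absurd h.1 (not_le.2 hA)),
      if_pos ⟨hA.le, by rw [Real.sqrt_mul_self hx0.le]; exact hC⟩,
      if_neg (not_le.2 hA),
      div_self hx0.ne', Real.sqrt_one, Real.sqrt_mul_self hx0.le]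
  field_simp
  ring

lemma diff_mid1 (sig sig' x : ℝ) (hBx : 1/sig'^4 ≤ x) (hxA : x ≤ 1/sig^4) :
    MSElim sig sig' x x - MMSElim sig x = (1 / Real.sqrt x - 1/(x*sig'^2))^2 := by
  simp only [MSElim, MMSElim]
  rw [if_pos ⟨hxA, hBx⟩, if_pos hxA]
  ring

lemma diff_mid2 (sig sig' x : ℝ) (hsig : 0 < sig)
    (hCB : 1/(sig^2*sig'^2) ≤ 1/sig'^4)
    (hAx : 1/sig^4 < x) (hxC : x < 1/(sig^2*sig'^2)) :
    MSElim sig sig' x x - MMSElim sig x = (sig^2 - 1/(x*sig^2))^2 := by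
  have hx0 : 0 < x := lt_trans (by positivity) hAx
  simp only [MSElim, MMSElim]
  rw [if_neg (fun h => absurd (lt_of_lt_of_le (lt_of_lt_of_le hxC hCB) h.2) (lt_irrefl x)),
      if_neg (fun h => absurd (le_trans h.2 (le_of_eq (Real.sqrt_mul_self hx0.le)))
        (not_le.2 hxC)),
      if_neg (not_le.2 hAx)]
  field_simp
  ring

/-- Sum rule: the integral over `λ ∈ (0,∞)` of the excess limiting
matched-SNR MSE over the limiting MMSE equals four times the Kullback–Leibler
divergence `D_KL(N(0,σ²) ‖ N(0,σ'²)) = ln(σ'/σ) + σ²/(2σ'²) − ½`. -/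
theorem mse_mmse_sum_rule (sig sig' : ℝ) (hsig : 0 < sig) (hsig' : 0 < sig') :
    (∫ lam in Set.Ioi (0 : ℝ), (MSElim sig sig' lam lam - MMSElim sig lam)) =
        4 * (Real.log (sig' / sig) + sig ^ 2 / (2 * sig' ^ 2) - 1 / 2) ∧
      4 * (Real.log (sig' / sig) + sig ^ 2 / (2 * sig' ^ 2) - 1 / 2) =
        4 * Real.log (sig' / sig) + 2 * sig ^ 2 / sig' ^ 2 - 2 := by
  constructor
  swap
  · ring
  set f : ℝ → ℝ := fun lam => MSElim sig sig' lam lam - MMSElim sig lam with hf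
  set K : ℝ := (1/sig'^2 - 1/sig^2)^2 with hK
  have hA : (0:ℝ) < 1/sig^4 := by positivity
  have hB : (0:ℝ) < 1/sig'^4 := by positivity
  have hC : (0:ℝ) < 1/(sig^2*sig'^2) := by positivity
  have hlog : Real.log (sig'/sig) = Real.log sig' - Real.log sig :=
    Real.log_div hsig'.ne' hsig.ne'
  have hLA : Real.log (1/sig^4) = -(4*Real.log sig) := by
    rw [one_div, Real.log_inv, Real.log_pow]; push_cast; ring
  have hLB : Real.log (1/sig'^4) = -(4*Real.log sig') := by
    rw [one_div, Real.log_inv, Real.log_pow]; push_cast; ring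
  have hLC : Real.log (1/(sig^2*sig'^2)) = -(2*Real.log sig + 2*Real.log sig') := by
    rw [one_div, Real.log_inv, Real.log_mul (by positivity) (by positivity),
      Real.log_pow, Real.log_pow]; push_cast; ring
  have hsA : Real.sqrt (1/sig^4) = 1/sig^2 := by
    rw [show (1:ℝ)/sig^4 = (1/sig^2)^2 by ring, Real.sqrt_sq (by positivity)]
  have hsB : Real.sqrt (1/sig'^4) = 1/sig'^2 := by
    rw [show (1:ℝ)/sig'^4 = (1/sig'^2)^2 by ring, Real.sqrt_sq (by positivity)]
  rcases le_total sig sig' with hcase | hcase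
  · -- sig ≤ sig' : B ≤ C ≤ A
    have hp : sig^2 ≤ sig'^2 := by nlinarith
    have hBA : 1/sig'^4 ≤ 1/sig^4 :=
      one_div_le_one_div_of_le (by positivity) (by nlinarith)
    have hCA : 1/(sig^2*sig'^2) ≤ 1/sig^4 :=
      one_div_le_one_div_of_le (by positivity) (by nlinarith)
    -- pieces
    have e1 : f =ᵐ[volume.restrict (Ioc 0 (1/sig'^4))] (fun _ => 0) := by
      filter_upwards [ae_restrict_mem measurableSet_Ioc, ae_ne_restrict _ (1/sig'^4)]
        with x hx hne
      exact diff_zero sig sig' x (lt_of_lt_of_le (lt_of_le_of_ne hx.2 hne) hBA)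
        (lt_of_le_of_ne hx.2 hne)
    have i1 : IntegrableOn f (Ioc 0 (1/sig'^4)) :=
      (integrable_zero _ _ _).congr e1.symm
    have v1 : ∫ x in Ioc (0:ℝ) (1/sig'^4), f x = 0 := by
      rw [integral_congr_ae e1]; simp
    have e2 : EqOn f (fun x => (1 / Real.sqrt x - 1/(x*sig'^2))^2)
        (Ioc (1/sig'^4) (1/sig^4)) := fun x hx =>
      diff_mid1 sig sig' x hx.1.le hx.2
    have i2 : IntegrableOn f (Ioc (1/sig'^4) (1/sig^4)) :=
      IntegrableOn.congr_fun
        ((cont1 _ (1/sig^4) _ hB (by positivity)).integrableOn_Icc.mono_set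
          Ioc_subset_Icc_self) e2.symm measurableSet_Ioc
    have v2 : ∫ x in Ioc (1/sig'^4) (1/sig^4), f x
        = (Real.log (1/sig^4) + (4/sig'^2) * (Real.sqrt (1/sig^4))⁻¹
            - (1/(sig'^2)^2) * (1/sig^4)⁻¹)
          - (Real.log (1/sig'^4) + (4/sig'^2) * (Real.sqrt (1/sig'^4))⁻¹
            - (1/(sig'^2)^2) * (1/sig'^4)⁻¹) := by
      rw [setIntegral_congr_fun measurableSet_Ioc e2]
      exact ftc1 _ _ _ hB hBA (by positivity)
    have e3 : EqOn f (fun x => K / x^2) (Ioi (1/sig^4)) := fun x hx =>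
      diff_tail sig sig' x hsig hsig' hx (le_of_lt (lt_of_le_of_lt hCA hx))
    have i3 : IntegrableOn f (Ioi (1/sig^4)) :=
      IntegrableOn.congr_fun (tail_integrable _ K hA) e3.symm measurableSet_Ioi
    have v3 : ∫ x in Ioi (1/sig^4), f x = K / (1/sig^4) := by
      rw [setIntegral_congr_fun measurableSet_Ioi e3]
      exact tail_value _ _ hA
    have i23 : IntegrableOn f (Ioi (1/sig'^4)) := by
      rw [← Ioc_union_Ioi_eq_Ioi hBA]; exact i2.union i3
    rw [← Ioc_union_Ioi_eq_Ioi hB.le,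
      setIntegral_union Ioc_disjoint_Ioi_same measurableSet_Ioi i1 i23,
      ← Ioc_union_Ioi_eq_Ioi hBA,
      setIntegral_union Ioc_disjoint_Ioi_same measurableSet_Ioi i2 i3,
      v1, v2, v3, hLA, hLB, hsA, hsB, hlog, hK]
    field_simp
    ring
  · -- sig' ≤ sig : A ≤ C ≤ B
    have hp : sig'^2 ≤ sig^2 := by nlinarith
    have hAC : 1/sig^4 ≤ 1/(sig^2*sig'^2) :=
      one_div_le_one_div_of_le (by positivity) (by nlinarith)
    have hCB : 1/(sig^2*sig'^2) ≤ 1/sig'^4 :=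
      one_div_le_one_div_of_le (by positivity) (by nlinarith)
    have hAB : 1/sig^4 ≤ 1/sig'^4 := le_trans hAC hCB
    have e1 : f =ᵐ[volume.restrict (Ioc 0 (1/sig^4))] (fun _ => 0) := by
      filter_upwards [ae_restrict_mem measurableSet_Ioc, ae_ne_restrict _ (1/sig^4)]
        with x hx hne
      exact diff_zero sig sig' x (lt_of_le_of_ne hx.2 hne)
        (lt_of_lt_of_le (lt_of_le_of_ne hx.2 hne) hAB)
    have i1 : IntegrableOn f (Ioc 0 (1/sig^4)) :=
      (integrable_zero _ _ _).congr e1.symm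
    have v1 : ∫ x in Ioc (0:ℝ) (1/sig^4), f x = 0 := by
      rw [integral_congr_ae e1]; simp
    have e2 : f =ᵐ[volume.restrict (Ioc (1/sig^4) (1/(sig^2*sig'^2)))]
        (fun x => (sig^2 - 1/(x*sig^2))^2) := by
      filter_upwards [ae_restrict_mem measurableSet_Ioc,
        ae_ne_restrict _ (1/(sig^2*sig'^2))] with x hx hne
      exact diff_mid2 sig sig' x hsig hCB hx.1 (lt_of_le_of_ne hx.2 hne)
    have i2 : IntegrableOn f (Ioc (1/sig^4) (1/(sig^2*sig'^2))) :=
      (((cont2 _ (1/(sig^2*sig'^2)) _ hA (by positivity)).integrableOn_Icc.mono_set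
        Ioc_subset_Icc_self)).congr e2.symm
    have v2 : ∫ x in Ioc (1/sig^4) (1/(sig^2*sig'^2)), f x
        = ((sig^2)^2 * (1/(sig^2*sig'^2)) - 2 * Real.log (1/(sig^2*sig'^2))
            - (1/(sig^2)^2) * (1/(sig^2*sig'^2))⁻¹)
          - ((sig^2)^2 * (1/sig^4) - 2 * Real.log (1/sig^4)
            - (1/(sig^2)^2) * (1/sig^4)⁻¹) := by
      rw [integral_congr_ae e2]
      exact ftc2 _ _ _ hA hAC (by positivity)
    have e3 : EqOn f (fun x => K / x^2) (Ioi (1/(sig^2*sig'^2))) := fun x hx =>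
      diff_tail sig sig' x hsig hsig' (lt_of_le_of_lt hAC hx) (le_of_lt hx)
    have i3 : IntegrableOn f (Ioi (1/(sig^2*sig'^2))) :=
      IntegrableOn.congr_fun (tail_integrable _ K hC) e3.symm measurableSet_Ioi
    have v3 : ∫ x in Ioi (1/(sig^2*sig'^2)), f x = K / (1/(sig^2*sig'^2)) := by
      rw [setIntegral_congr_fun measurableSet_Ioi e3]
      exact tail_value _ _ hC
    have i23 : IntegrableOn f (Ioi (1/sig^4)) := by
      rw [← Ioc_union_Ioi_eq_Ioi hAC]; exact i2.union i3
    rw [← Ioc_union_Ioi_eq_Ioi hA.le,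
      setIntegral_union Ioc_disjoint_Ioi_same measurableSet_Ioi i1 i23,
      ← Ioc_union_Ioi_eq_Ioi hAC,
      setIntegral_union Ioc_disjoint_Ioi_same measurableSet_Ioi i2 i3,
      v1, v2, v3, hLA, hLC, hlog, hK]
    field_simp
    ring


end
end

section
/- For every fixed σ, λ > 0, the limiting mismatched MSE formula (λ',σ') ↦ MSE∞(σ,σ',λ,λ') is a continuous function on (0,∞)²; in particular the phase transitions of the limiting MSE are continuous phase transitions. -/
open MeasureTheory ProbabilityTheory Filter Matrix

noncomputable section

lemma mse_aux1 (x y : ℝ) (hx : 0 < x) (hy : 0 < y) :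
    1 / y ^ 4 ≤ x ↔ 0 ≤ 1 / Real.sqrt x - 1 / (x * y ^ 2) := by
  have hr : 0 < Real.sqrt x := Real.sqrt_pos.mpr hx
  have hr2 : Real.sqrt x ^ 2 = x := Real.sq_sqrt hx.le
  rw [sub_nonneg, div_le_div_iff₀ (by positivity) hr, one_mul, one_mul,
    div_le_iff₀ (by positivity)]
  set r := Real.sqrt x with hrdef
  rw [← hr2]
  constructor
  · intro h
    nlinarith [sq_nonneg (r * y ^ 2 - 1), mul_pos hr (mul_pos hy hy), sq_nonneg y]
  · intro h
    nlinarith [sq_nonneg (r * y ^ 2 - 1), mul_pos hr (mul_pos hy hy), sq_nonneg y]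

lemma mse_identity (a b s t : ℝ) (ha : a ≠ 0) (hb : b ≠ 0) (hs : s ≠ 0) (ht : t ≠ 0) :
    s ^ 4 * (1 - a / b) ^ 2 + 2 / (a * b) + 1 / ((b ^ 2) ^ 2 * t ^ 4) +
      (2 * s ^ 2 / (b ^ 2 * t ^ 2)) * (1 - a / b) -
      2 / (a ^ 2 * b ^ 2 * s ^ 2 * t ^ 2)
    = s ^ 4 + (a * b * (s ^ 2 * t ^ 2) - 1) *
        ((a ^ 2 * (a * b) * s ^ 4 * t ^ 2 - 2 * a ^ 2 * b ^ 2 * s ^ 4 * t ^ 2 -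
          a ^ 2 * s ^ 2 + 2 * b ^ 2 * t ^ 2) / (a ^ 2 * (b ^ 2) ^ 2 * s ^ 2 * t ^ 4)) := by
  field_simp
  ring

/-- For fixed `σ, λ > 0` the limiting mismatched MSE
`(λ',σ') ↦ MSE∞(σ,σ',λ,λ')` is continuous on `(0,∞)²`:
the phase transitions are continuous. -/
theorem mse_lim_continuousOn (sig lam : ℝ) (hsig : 0 < sig) (hlam : 0 < lam) :
    ContinuousOn (fun p : ℝ × ℝ => MSElim sig p.2 lam p.1)
      (Set.Ioi 0 ×ˢ Set.Ioi 0) := by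
  rcases le_or_gt lam (1 / sig ^ 4) with hc | hc
  · -- low-λ phase: MSElim = σ⁴ + max(1/√λ' − 1/(λ'σ'²), 0)²
    have hG : ContinuousOn
        (fun p : ℝ × ℝ => sig ^ 4 +
          (max (1 / Real.sqrt p.1 - 1 / (p.1 * p.2 ^ 2)) 0) ^ 2)
        (Set.Ioi 0 ×ˢ Set.Ioi 0) := by
      have c1 : ContinuousOn (fun p : ℝ × ℝ => 1 / Real.sqrt p.1)
          (Set.Ioi 0 ×ˢ Set.Ioi 0) := by
        apply ContinuousOn.div continuousOn_const
          (Continuous.continuousOn (by fun_prop))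
        intro p hp
        exact ne_of_gt (Real.sqrt_pos.mpr hp.1)
      have c2 : ContinuousOn (fun p : ℝ × ℝ => 1 / (p.1 * p.2 ^ 2))
          (Set.Ioi 0 ×ˢ Set.Ioi 0) := by
        apply ContinuousOn.div continuousOn_const
          (Continuous.continuousOn (by fun_prop))
        intro p hp
        have h1 : (0:ℝ) < p.1 := hp.1
        have h2 : (0:ℝ) < p.2 := hp.2
        positivity
      exact continuousOn_const.add
        (((continuous_id.max continuous_const).comp_continuousOn (c1.sub c2)).pow 2)
    apply hG.congr
    intro p hp
    have h1 : (0:ℝ) < p.1 := hp.1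
    have h2 : (0:ℝ) < p.2 := hp.2
    simp only [MSElim]
    split_ifs with hA hB
    · rw [max_eq_left ((mse_aux1 p.1 p.2 h1 h2).mp hA.2)]
    · -- impossible: forces λ = 1/σ⁴ and λ' ≥ 1/σ'⁴
      exfalso
      push_neg at hA
      have hA2 := hA hc
      rw [lt_div_iff₀ (by positivity)] at hA2
      have hm2 : Real.sqrt (lam * p.1) ^ 2 = lam * p.1 := Real.sq_sqrt (by positivity)
      have hm : 0 ≤ Real.sqrt (lam * p.1) := Real.sqrt_nonneg _
      have h3 := hB.2
      rw [div_le_iff₀ (by positivity)] at h3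
      have h4 : 1 ≤ lam * p.1 * (sig ^ 2 * p.2 ^ 2) ^ 2 := by nlinarith
      have h5 : lam * sig ^ 4 = 1 := by
        have : lam = 1 / sig ^ 4 := le_antisymm hc hB.1
        rw [this]; field_simp
      nlinarith
    · have hd : 1 / Real.sqrt p.1 - 1 / (p.1 * p.2 ^ 2) ≤ 0 := by
        by_contra hcon
        push_neg at hcon
        exact hA ⟨hc, (mse_aux1 p.1 p.2 h1 h2).mpr hcon.le⟩
      rw [max_eq_right hd]
      ring
  · -- high-λ phase
    have hG : ContinuousOn
        (fun p : ℝ × ℝ => sig ^ 4 +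
          max (Real.sqrt (lam * p.1) * (sig ^ 2 * p.2 ^ 2) - 1) 0 *
            ((lam * Real.sqrt (lam * p.1) * sig ^ 4 * p.2 ^ 2 -
              2 * lam * p.1 * sig ^ 4 * p.2 ^ 2 - lam * sig ^ 2 + 2 * p.1 * p.2 ^ 2) /
              (lam * p.1 ^ 2 * sig ^ 2 * p.2 ^ 4)))
        (Set.Ioi 0 ×ˢ Set.Ioi 0) := by
      apply continuousOn_const.add
      apply ContinuousOn.mul (Continuous.continuousOn (by fun_prop))
      apply ContinuousOn.div (Continuous.continuousOn (by fun_prop))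
        (Continuous.continuousOn (by fun_prop))
      intro p hp
      have h1 : (0:ℝ) < p.1 := hp.1
      have h2 : (0:ℝ) < p.2 := hp.2
      positivity
    apply hG.congr
    intro p hp
    have h1 : (0:ℝ) < p.1 := hp.1
    have h2 : (0:ℝ) < p.2 := hp.2
    simp only [MSElim]
    have hnA : ¬(lam ≤ 1 / sig ^ 4 ∧ 1 / p.2 ^ 4 ≤ p.1) := fun h => absurd h.1 (not_le.mpr hc)
    rw [if_neg hnA]
    split_ifs with hB
    · -- on the active region: the algebraic identity
      have hb : 0 < Real.sqrt p.1 := Real.sqrt_pos.mpr h1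
      have ha : 0 < Real.sqrt lam := Real.sqrt_pos.mpr hlam
      have ha2 : Real.sqrt lam ^ 2 = lam := Real.sq_sqrt hlam.le
      have hb2 : Real.sqrt p.1 ^ 2 = p.1 := Real.sq_sqrt h1.le
      have hmul : Real.sqrt (lam * p.1) = Real.sqrt lam * Real.sqrt p.1 :=
        Real.sqrt_mul hlam.le p.1
      have hdiv : Real.sqrt (lam / p.1) = Real.sqrt lam / Real.sqrt p.1 :=
        Real.sqrt_div hlam.le p.1
      have h3 := hB.2
      rw [div_le_iff₀ (by positivity)] at h3
      rw [hmul] at h3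
      have hmax : max (Real.sqrt (lam * p.1) * (sig ^ 2 * p.2 ^ 2) - 1) 0
          = Real.sqrt (lam * p.1) * (sig ^ 2 * p.2 ^ 2) - 1 :=
        max_eq_left (by rw [hmul]; linarith)
      rw [hmax, hmul, hdiv]
      set a := Real.sqrt lam with ha'
      set b := Real.sqrt p.1 with hb'
      rw [show lam = a ^ 2 from ha2.symm, show p.1 = b ^ 2 from hb2.symm]
      have := mse_identity a b sig p.2 (ne_of_gt ha) (ne_of_gt hb)
        (ne_of_gt hsig) (ne_of_gt h2)
      rw [this]
    · push_neg at hB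
      have h3 := hB hc.le
      rw [lt_div_iff₀ (by positivity)] at h3
      have hmax : max (Real.sqrt (lam * p.1) * (sig ^ 2 * p.2 ^ 2) - 1) 0 = 0 :=
        max_eq_right (by nlinarith)
      rw [hmax]
      ring

end
end

section
/- For all σ, λ > 0 and all λ', σ' > 0, the limiting mismatched MSE formula is bounded below by the limiting MMSE: MSE∞(σ,σ',λ,λ') ≥ MMSE∞(σ,λ), with equality when λ' = λ and σ' = σ; i.e., the minimum over the statistician's parameters of the limiting mismatched MSE equals the limiting MMSE and is attained at the matched parameters. -/
open MeasureTheory ProbabilityTheory Filter Matrix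

noncomputable section

private lemma mmse_le_sig4 (sig lam : ℝ) (hsig : 0 < sig) (hlam : 0 < lam) :
    MMSElim sig lam ≤ sig ^ 4 := by
  unfold MMSElim
  split_ifs with h
  · exact le_refl _
  · have hs : (0:ℝ) < sig ^ 4 := by positivity
    rw [div_sub_div _ _ (ne_of_gt hlam) (by positivity), div_le_iff₀ (by positivity)]
    nlinarith [sq_nonneg (lam * sig ^ 4 - 1)]

/-- The limiting mismatched MSE is bounded below by the limiting
MMSE, with equality at the matched parameters `λ' = λ`, `σ' = σ`. -/
theorem mse_lim_ge_mmse_lim (sig sig' lam lam' : ℝ)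
    (hsig : 0 < sig) (hsig' : 0 < sig') (hlam : 0 < lam) (hlam' : 0 < lam') :
    MMSElim sig lam ≤ MSElim sig sig' lam lam' ∧
      MSElim sig sig lam lam = MMSElim sig lam := by
  have hs4 : (0:ℝ) < sig ^ 4 := by positivity
  have hu : 0 < Real.sqrt lam := Real.sqrt_pos.2 hlam
  have hv : 0 < Real.sqrt lam' := Real.sqrt_pos.2 hlam'
  have hu2 : Real.sqrt lam ^ 2 = lam := Real.sq_sqrt hlam.le
  have hv2 : Real.sqrt lam' ^ 2 = lam' := Real.sq_sqrt hlam'.le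
  have hdiv : Real.sqrt (lam / lam') = Real.sqrt lam / Real.sqrt lam' :=
    Real.sqrt_div hlam.le lam'
  have hmul : Real.sqrt (lam * lam') = Real.sqrt lam * Real.sqrt lam' :=
    Real.sqrt_mul hlam.le lam'
  constructor
  · unfold MSElim
    split_ifs with h1 h2
    · calc MMSElim sig lam ≤ sig ^ 4 := mmse_le_sig4 sig lam hsig hlam
        _ ≤ _ := by nlinarith [sq_nonneg (1 / Real.sqrt lam' - 1 / (lam' * sig' ^ 2))]
    · -- branch 2: perfect square identity
      have hMM : MMSElim sig lam ≤ 2 / lam - 1 / (lam ^ 2 * sig ^ 4) := by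
        unfold MMSElim
        split_ifs with h
        · have h' : lam * sig ^ 4 ≤ 1 := by rwa [le_div_iff₀ hs4] at h
          have h'' : 1 ≤ lam * sig ^ 4 := by
            have := h2.1
            rwa [div_le_iff₀ hs4] at this
          have heq : lam * sig ^ 4 = 1 := le_antisymm h' h''
          have hl : lam = 1 / sig ^ 4 := by
            field_simp
            linarith [heq]
          rw [hl]
          have : ((1:ℝ) / sig ^ 4) ^ 2 * sig ^ 4 = 1 / sig ^ 4 := by
            field_simp
          rw [this]
          field_simp
          linarith
        · exact le_refl _
      refine le_trans hMM ?_
      rw [hdiv, hmul]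
      set u := Real.sqrt lam with hus
      set v := Real.sqrt lam' with hvs
      rw [← hu2, ← hv2]
      have key : sig ^ 4 * (1 - u / v) ^ 2 +
          2 / (u * v) + 1 / ((v ^ 2) ^ 2 * sig' ^ 4) +
          2 * sig ^ 2 / (v ^ 2 * sig' ^ 2) * (1 - u / v) -
          2 / (u ^ 2 * v ^ 2 * sig ^ 2 * sig' ^ 2) -
          (2 / u ^ 2 - 1 / ((u ^ 2) ^ 2 * sig ^ 4)) =
          (sig ^ 2 * (1 - u / v) + 1 / (v ^ 2 * sig' ^ 2)
            - 1 / (u ^ 2 * sig ^ 2)) ^ 2 := by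
        field_simp
        ring
      nlinarith [key, sq_nonneg (sig ^ 2 * (1 - u / v) + 1 / (v ^ 2 * sig' ^ 2) - 1 / (u ^ 2 * sig ^ 2))]
    · exact mmse_le_sig4 sig lam hsig hlam
  · unfold MSElim MMSElim
    rcases lt_trichotomy lam (1 / sig ^ 4) with h | h | h
    · rw [if_neg, if_neg, if_pos h.le]
      · rintro ⟨h1, -⟩; exact absurd h1 (not_le.2 h)
      · rintro ⟨-, h2⟩; exact absurd h2 (not_le.2 h)
    · rw [if_pos ⟨h.le, h.ge⟩, if_pos h.le]
      have hsl : Real.sqrt lam = 1 / sig ^ 2 := by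
        rw [h, show (1:ℝ) / sig ^ 4 = (1 / sig ^ 2) ^ 2 by ring, Real.sqrt_sq (by positivity)]
      rw [hsl, h]
      field_simp
      ring
    · have hns : ¬ lam ≤ 1 / sig ^ 4 := not_le.2 h
      rw [if_neg (fun hc => hns hc.1), if_neg hns, if_pos]
      · have hss : Real.sqrt (lam / lam) = 1 := by
          rw [div_self (ne_of_gt hlam), Real.sqrt_one]
        have hmm : Real.sqrt (lam * lam) = lam := by
          rw [Real.sqrt_mul_self hlam.le]
        rw [hss, hmm]
        field_simp
        ring
      · refine ⟨h.le, ?_⟩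
        rw [Real.sqrt_mul_self hlam.le]
        calc 1 / (sig ^ 2 * sig ^ 2) = 1 / sig ^ 4 := by ring_nf
          _ ≤ lam := h.le

end
end

section
/- For σ = 1 and λ = 2, for every λ' ∈ (0,8) there exists σ' > 0 (namely σ'² = 1/(√(2λ') − λ'/2)) such that MSE∞(1,σ',2,λ') = 3/4 = MMSE∞(1,2); i.e., the statistician can achieve the Bayes-optimal MMSE at mismatched parameter values. -/
open MeasureTheory ProbabilityTheory Filter Matrix

noncomputable section

/-- For `σ = 1, λ = 2` and any `λ' ∈ (0,8)`, choosing
`σ'² = 1/(√(2λ') − λ'/2)` achieves the Bayes-optimal MMSE `3/4` at mismatched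
parameters. -/
theorem mmse_achievable_at_mismatched_parameters :
    ∀ lam' ∈ Set.Ioo (0 : ℝ) 8, ∃ sig' : ℝ, 0 < sig' ∧
      sig' ^ 2 = 1 / (Real.sqrt (2 * lam') - lam' / 2) ∧
      MSElim 1 sig' 2 lam' = 3 / 4 ∧ MMSElim 1 2 = 3 / 4 := by
  rintro lam' ⟨hl0, hl8⟩
  set a : ℝ := Real.sqrt (2 * lam') with ha
  have ha0 : 0 < a := Real.sqrt_pos.mpr (by linarith)
  have ha2 : a ^ 2 = 2 * lam' := Real.sq_sqrt (by linarith)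
  have hag : lam' / 2 < a := by
    nlinarith [sq_nonneg (a - lam' / 2)]
  have ht0 : 0 < a - lam' / 2 := by linarith
  refine ⟨Real.sqrt (1 / (a - lam' / 2)), Real.sqrt_pos.mpr (by positivity), ?_, ?_, ?_⟩
  · exact Real.sq_sqrt (by positivity)
  · have hs2 : (Real.sqrt (1 / (a - lam' / 2))) ^ 2 = 1 / (a - lam' / 2) :=
      Real.sq_sqrt (by positivity)
    set s : ℝ := Real.sqrt (1 / (a - lam' / 2)) with hs
    have hs0 : 0 < s := Real.sqrt_pos.mpr (by positivity)
    have hsaa : Real.sqrt (2 * lam') = a := rfl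
    have hsqq : Real.sqrt (2 / lam') = a / lam' := by
      rw [show (2 : ℝ) / lam' = (a / lam') ^ 2 by field_simp; nlinarith]
      exact Real.sqrt_sq (by positivity)
    rw [MSElim, if_neg, if_pos]
    · have hs4 : s ^ 4 = (1 / (a - lam' / 2)) ^ 2 := by
        rw [show s ^ 4 = (s ^ 2) ^ 2 by ring, hs2]
      rw [hsaa, hsqq, hs4, hs2]
      have hne : a ≠ 0 := ne_of_gt ha0
      rw [show lam' = a ^ 2 / 2 by linarith]
      have h2 : a - a ^ 2 / 2 / 2 ≠ 0 := by
        have : lam' = a ^ 2 / 2 := by linarith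
        rw [← this]; exact ne_of_gt ht0
      field_simp
      ring
    · constructor
      · norm_num
      · rw [hs2, hsaa]
        rw [one_pow, one_mul]
        rw [one_div_one_div]
        linarith
    · rintro ⟨h, -⟩
      norm_num at h
  · rw [MMSElim]
    norm_num

end
end

section
/- Let σ' > σ > 0. Then the matched-SNR limiting MSE λ ↦ MSE∞(σ,σ',λ,λ), which on the interval 1/σ'⁴ ≤ λ ≤ 1/σ⁴ equals σ⁴ + 1/λ − (1/(λ^{3/2}σ'²))·(2 − 1/(√λ σ'²)), is strictly increasing in λ on the interval (1/σ'⁴, min(4/σ'⁴, 1/σ⁴)); i.e., when the statistician overestimates the prior variance, the limiting MSE can increase as the true SNR increases. -/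
open MeasureTheory ProbabilityTheory Filter Matrix

noncomputable section

/-- For `σ' > σ > 0`, the matched-SNR limiting MSE
`λ ↦ MSE∞(σ,σ',λ,λ)` equals `σ⁴ + 1/λ − (1/(λ^{3/2}σ'²))(2 − 1/(√λ σ'²))` on
`[1/σ'⁴, 1/σ⁴]` and is strictly increasing on `(1/σ'⁴, min(4/σ'⁴, 1/σ⁴))`. -/
theorem matched_mse_increasing_in_snr (sig sig' : ℝ)
    (hsig : 0 < sig) (hlt : sig < sig') :
    (∀ lam : ℝ, 1 / sig' ^ 4 ≤ lam → lam ≤ 1 / sig ^ 4 →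
        MSElim sig sig' lam lam =
          sig ^ 4 + 1 / lam -
            (1 / (lam ^ ((3 : ℝ) / 2) * sig' ^ 2)) *
              (2 - 1 / (Real.sqrt lam * sig' ^ 2))) ∧
      StrictMonoOn (fun lam => MSElim sig sig' lam lam)
        (Set.Ioo (1 / sig' ^ 4) (min (4 / sig' ^ 4) (1 / sig ^ 4))) := by
  have hsig' : (0:ℝ) < sig' := hsig.trans hlt
  have hs4 : (0:ℝ) < sig' ^ 4 := by positivity
  constructor
  · intro lam h1 h2
    have hlam : 0 < lam := lt_of_lt_of_le (by positivity) h1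
    have ht : 0 < Real.sqrt lam := Real.sqrt_pos.2 hlam
    have hsq : Real.sqrt lam ^ 2 = lam := Real.sq_sqrt hlam.le
    have h32 : lam ^ ((3:ℝ)/2) = Real.sqrt lam ^ 3 := by
      rw [Real.sqrt_eq_rpow, ← Real.rpow_natCast (lam ^ ((1:ℝ)/2)) 3,
        ← Real.rpow_mul hlam.le]
      norm_num
    rw [MSElim, if_pos ⟨h2, h1⟩, h32]
    rw [← hsq]
    set t := Real.sqrt lam
    have hs2 : (0:ℝ) < sig' ^ 2 := by positivity
    rw [Real.sqrt_sq ht.le]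
    field_simp
    ring
  · intro a ha b hb hab
    simp only [Set.mem_Ioo, lt_min_iff] at ha hb
    have hapos : 0 < a := lt_trans (by positivity) ha.1
    have hbpos : 0 < b := lt_trans (by positivity) hb.1
    have ha2 : a ≤ 1 / sig ^ 4 := le_of_lt ha.2.2
    have hb2 : b ≤ 1 / sig ^ 4 := le_of_lt hb.2.2
    have ha1 : 1 / sig' ^ 4 ≤ a := le_of_lt ha.1
    have hb1 : 1 / sig' ^ 4 ≤ b := le_of_lt hb.1
    show MSElim sig sig' a a < MSElim sig sig' b b
    rw [MSElim, MSElim, if_pos (And.intro ha2 ha1), if_pos (And.intro hb2 hb1)]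
    have hta : 0 < Real.sqrt a := Real.sqrt_pos.2 hapos
    have htb : 0 < Real.sqrt b := Real.sqrt_pos.2 hbpos
    have htab : Real.sqrt a < Real.sqrt b := Real.sqrt_lt_sqrt hapos.le hab
    have hsa : Real.sqrt a ^ 2 = a := Real.sq_sqrt hapos.le
    have hsb : Real.sqrt b ^ 2 = b := Real.sq_sqrt hbpos.le
    have hs2 : (0:ℝ) < sig' ^ 2 := by positivity
    -- lower bound: sig'^2 * sqrt a > 1
    have hlo : 1 < sig' ^ 2 * Real.sqrt a := by
      have h4 : Real.sqrt (1 / sig' ^ 4) = 1 / sig' ^ 2 := by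
        rw [show (1:ℝ)/sig'^4 = (1/sig'^2)^2 by ring, Real.sqrt_sq (by positivity)]
      have := Real.sqrt_lt_sqrt (by positivity : (0:ℝ) ≤ 1 / sig' ^ 4) ha.1
      rw [h4, div_lt_iff₀ (by positivity)] at this
      linarith
    -- upper bound: sig'^2 * sqrt b < 2
    have hhi : sig' ^ 2 * Real.sqrt b < 2 := by
      have h4 : Real.sqrt (4 / sig' ^ 4) = 2 / sig' ^ 2 := by
        rw [show (4:ℝ)/sig'^4 = (2/sig'^2)^2 by ring, Real.sqrt_sq (by positivity)]
      have := Real.sqrt_lt_sqrt hbpos.le hb.2.1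
      rw [h4, lt_div_iff₀ (by positivity)] at this
      linarith
    have hlo' : 1 < sig' ^ 2 * Real.sqrt b := hlo.trans_le (by nlinarith)
    -- g a < g b
    set x := Real.sqrt a with hx
    set y := Real.sqrt b with hy
    have key : sig' ^ 2 * (x * y) < x + y := by nlinarith
    have gmono : 1 / x - 1 / (a * sig' ^ 2) < 1 / y - 1 / (b * sig' ^ 2) := by
      rw [div_sub_div _ _ (ne_of_gt hta) (by positivity),
        div_sub_div _ _ (ne_of_gt htb) (by positivity),
        div_lt_div_iff₀ (by positivity) (by positivity), ← hsa, ← hsb]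
      nlinarith [mul_pos (mul_pos (mul_pos hs2 (mul_pos hta htb)) (sub_pos.2 htab))
        (sub_pos.2 key)]
    have gpos : 0 ≤ 1 / x - 1 / (a * sig' ^ 2) := by
      rw [sub_nonneg]
      apply one_div_le_one_div_of_le hta
      nlinarith
    have hsq2 := pow_lt_pow_left₀ gmono gpos (two_ne_zero)
    linarith

end
end
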